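/- Let B be a real Banach space and ξ : ℕ → B a Schauder basis of B, with coefficient functionals cᵢ, each of which is a continuous linear functional. Assume: (A3) for every continuous linear functional f on B, ‖f − ∑_{i<n} f(ξ(i)) • cᵢ(·)‖ → 0 in the dual norm as n → ∞. Then the map x ↦ (cᵢ(x))_{i∈ℕ}, restricted to the closed unit ball {x ∈ B : ‖x‖ ≤ 1} equipped with the subspace topology from the weak topology of B, is a topological embedding into ℕ → ℝ with the product topology; in particular, on the closed unit ball the weak topology coincides with the topology of pointwise convergence of the basis coefficients. -/

import Mathlib

open Filter Topology

/-- Under continuity of the coefficient functionals and assumption (A3),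
the coefficient map, restricted to the closed unit ball with the subspace topology coming
from the weak topology of `B`, is a topological embedding into `ℕ → ℝ` with the product
topology: on the unit ball the weak topology coincides with pointwise convergence of the
basis coefficients. -/
theorem schauder_weak_topology_eq_product_on_ball
    {B : Type*} [NormedAddCommGroup B] [NormedSpace ℝ B] [CompleteSpace B]
    (ξ : ℕ → B) (c : B → ℕ → ℝ)
    (hconv : ∀ x : B,
      Tendsto (fun n => ∑ i ∈ Finset.range n, c x i • ξ i) atTop (𝓝 x))
    (huniq : ∀ (x : B) (d : ℕ → ℝ),
      Tendsto (fun n => ∑ i ∈ Finset.range n, d i • ξ i) atTop (𝓝 x) → d = c x)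
    (φ : ℕ → B →L[ℝ] ℝ) (hφ : ∀ (i : ℕ) (x : B), φ i x = c x i)
    (A3 : ∀ f : B →L[ℝ] ℝ,
      Tendsto (fun n => ‖f - ∑ i ∈ Finset.range n, f (ξ i) • φ i‖) atTop (𝓝 0)) :
    IsEmbedding (fun x : (toWeakSpace ℝ B '' Metric.closedBall (0 : B) 1) =>
      fun i : ℕ => c ((toWeakSpace ℝ B).symm x.1) i) := by
  set T := toWeakSpace ℝ B with hT
  set S := (T '' Metric.closedBall (0 : B) 1) with hS
  set F : S → ℕ → ℝ := fun x i => c (T.symm x.1) i with hF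
  -- norm bound for elements of S
  have hnorm : ∀ x : S, ‖T.symm x.1‖ ≤ 1 := by
    rintro ⟨x, z, hz, rfl⟩
    rw [mem_closedBall_zero_iff] at hz
    simpa [T] using hz
  -- injectivity of the pairing
  have hinj : Function.Injective ((topDualPairing ℝ B).flip) := by
    intro x y h
    have h' : ∀ f : B →L[ℝ] ℝ, f (x - y) = 0 := by
      intro f
      have := LinearMap.congr_fun h f
      simp only [LinearMap.flip_apply] at this
      simp only [map_sub, sub_eq_zero]
      exact this
    exact sub_eq_zero.mp (NormedSpace.eq_zero_of_forall_dual_eq_zero ℝ h')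
  -- continuity of F
  have hcont : Continuous F := by
    apply continuous_pi
    intro i
    have h1 : Continuous fun y : WeakSpace ℝ B => (topDualPairing ℝ B).flip y (φ i) :=
      WeakBilin.eval_continuous _ (φ i)
    have : Continuous fun x : S => (topDualPairing ℝ B).flip x.1 (φ i) :=
      h1.comp continuous_subtype_val
    convert this using 2 with x
    exact (hφ i (T.symm x.1)).symm
  constructor
  · rw [isInducing_iff_nhds]
    intro x
    refine le_antisymm (tendsto_iff_comap.mp (hcont.tendsto x)) ?_
    -- hard direction
    have key : Tendsto (fun y : S => (y.1 : WeakSpace ℝ B))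
        (comap F (𝓝 (F x))) (𝓝 x.1) := by
      refine (WeakBilin.tendsto_iff_forall_eval_tendsto (B := (topDualPairing ℝ B).flip) hinj).mpr ?_
      intro f
      show Tendsto (fun y : S => f (T.symm y.1)) (comap F (𝓝 (F x))) (𝓝 (f (T.symm x.1)))
      rw [Metric.tendsto_nhds]
      intro ε hε
      set x₀ := T.symm x.1 with hx₀
      obtain ⟨n, hn⟩ := ((A3 f).eventually_lt_const (show (0:ℝ) < ε/4 by positivity)).exists
      set fn := ∑ i ∈ Finset.range n, f (ξ i) • φ i with hfn
      set M := ∑ i ∈ Finset.range n, |f (ξ i)| with hM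
      have hM0 : (0:ℝ) ≤ M := Finset.sum_nonneg fun i _ => abs_nonneg _
      set δ := ε/(2*(M+1)) with hδ
      have hδ0 : 0 < δ := by positivity
      have hV : Set.pi (Finset.range n : Set ℕ) (fun i => Metric.ball (c x₀ i) δ)
          ∈ 𝓝 (F x) := by
        refine set_pi_mem_nhds (Finset.range n).finite_toSet fun i _ => ?_
        exact Metric.ball_mem_nhds _ hδ0
      refine eventually_of_mem (preimage_mem_comap hV) ?_
      intro y hy
      set y₀ := T.symm y.1 with hy₀
      have hyc : ∀ i < n, |c y₀ i - c x₀ i| < δ := by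
        intro i hi
        have := hy i (by simpa using hi)
        simpa [Real.dist_eq] using this
      have hb1 : ‖y₀ - x₀‖ ≤ 2 := by
        calc ‖y₀ - x₀‖ ≤ ‖y₀‖ + ‖x₀‖ := norm_sub_le _ _
          _ ≤ 2 := by linarith [hnorm x, hnorm y]
      have e1 : |(f - fn) (y₀ - x₀)| ≤ ε/2 := by
        rw [← Real.norm_eq_abs]
        calc ‖(f - fn) (y₀ - x₀)‖ ≤ ‖f - fn‖ * ‖y₀ - x₀‖ := (f - fn).le_opNorm _
          _ ≤ (ε/4) * 2 :=
            mul_le_mul hn.le hb1 (norm_nonneg _) (by positivity)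
          _ = ε/2 := by ring
      have hfne : fn (y₀ - x₀) = ∑ i ∈ Finset.range n, f (ξ i) * (c y₀ i - c x₀ i) := by
        simp [hfn, ContinuousLinearMap.sum_apply, ContinuousLinearMap.smul_apply,
          smul_eq_mul, map_sub, hφ, mul_sub]
      have e2 : |fn (y₀ - x₀)| < ε/2 := by
        rw [hfne]
        have step1 : |∑ i ∈ Finset.range n, f (ξ i) * (c y₀ i - c x₀ i)|
            ≤ ∑ i ∈ Finset.range n, |f (ξ i)| * δ := by
          refine (Finset.abs_sum_le_sum_abs _ _).trans (Finset.sum_le_sum fun i hi => ?_)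
          rw [abs_mul]
          exact mul_le_mul_of_nonneg_left (hyc i (Finset.mem_range.mp hi)).le (abs_nonneg _)
        have step2 : ∑ i ∈ Finset.range n, |f (ξ i)| * δ = M * δ := by
          rw [hM, Finset.sum_mul]
        have step3 : (M+1) * δ = ε/2 := by
          rw [hδ]; field_simp
        have step4 : M * δ < (M+1) * δ := by nlinarith
        linarith
      have hsplit : f y₀ - f x₀ = (f - fn) (y₀ - x₀) + fn (y₀ - x₀) := by
        simp only [ContinuousLinearMap.sub_apply, map_sub]
        ring
      calc dist (f y₀) (f x₀) = |f y₀ - f x₀| := Real.dist_eq _ _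
        _ ≤ |(f - fn) (y₀ - x₀)| + |fn (y₀ - x₀)| := by rw [hsplit]; exact abs_add_le _ _
        _ < ε := by linarith
    calc comap F (𝓝 (F x)) ≤ comap Subtype.val (𝓝 x.1) := tendsto_iff_comap.mp key
      _ = 𝓝 x := (nhds_induced _ _).symm
  · -- injectivity
    intro x y h
    have hx := hconv (T.symm x.1)
    have hy := hconv (T.symm y.1)
    have hcc : c (T.symm x.1) = c (T.symm y.1) := funext fun i => congrFun h i
    rw [hcc] at hx
    have := tendsto_nhds_unique hx hy
    exact Subtype.ext (T.symm.injective this)
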